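/- arXiv:2107.13776 — 5 statements merged into one kernel-verified Lean document; each statement's English description precedes it below -/
import Mathlib

section
/- For every integer m ≥ 1 and every real number z, the confluent hypergeometric series ₁F₁(m, 1, z) terminates after Kummer's transformation: ∑'_{n=0}^{∞} (m)_n · z^n / (n!)² = exp(z) · ∑_{i=0}^{m−1} [(m−1)! / ((m−1−i)! · (i!)²)] · z^i, where the left-hand side is the (absolutely convergent) infinite sum taken as a tsum over ℕ. -/
/-- The rising factorial (Pochhammer symbol): `(m)_n = m·(m+1)···(m+n−1)`, with `(m)_0 = 1`. -/
def risingFactorial (m : ℕ) : ℕ → ℕ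
  | 0 => 1
  | n + 1 => risingFactorial m n * (m + n)

lemma risingFactorial_eq (m : ℕ) (hm : 1 ≤ m) (n : ℕ) :
    risingFactorial m n = (m - 1 + n).choose n * n.factorial := by
  have h : ∀ n, (m - 1).factorial * risingFactorial m n = (m - 1 + n).factorial := by
    intro n
    induction n with
    | zero => simp [risingFactorial]
    | succ k ih =>
        have h1 : m - 1 + (k + 1) = (m - 1 + k) + 1 := by omega
        have h2 : m - 1 + k + 1 = m + k := by omega
        rw [risingFactorial, ← mul_assoc, ih, h1, Nat.factorial_succ, h2, mul_comm]
  have hc := Nat.choose_mul_factorial_mul_factorial (Nat.le_add_left n (m - 1))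
  have hsub : m - 1 + n - n = m - 1 := by omega
  rw [hsub] at hc
  have := h n
  have hpos : 0 < (m - 1).factorial := Nat.factorial_pos _
  apply Nat.eq_of_mul_eq_mul_left hpos
  rw [this, ← hc]; ring

lemma vandermonde' (M n : ℕ) :
    ∑ j ∈ Finset.range (n + 1), M.choose j * n.choose j = (M + n).choose n := by
  rw [Nat.add_choose_eq,
    Finset.Nat.sum_antidiagonal_eq_sum_range_succ (fun i j => M.choose i * n.choose j)]
  refine Finset.sum_congr rfl fun j hj => ?_
  simp only [Finset.mem_range, Nat.lt_succ_iff] at hj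
  rw [Nat.choose_symm hj]


/-- For every integer `m ≥ 1` and real `z`, the confluent hypergeometric series
`₁F₁(m, 1, z) = ∑_{n} (m)_n z^n / (n!)²` terminates after Kummer's transformation:
`₁F₁(m, 1, z) = exp z · ∑_{i=0}^{m-1} (m-1)!/((m-1-i)!·(i!)²) · z^i`. -/
theorem kummer_transform_terminates (m : ℕ) (hm : 1 ≤ m) (z : ℝ) :
    ∑' n : ℕ, (risingFactorial m n : ℝ) * z ^ n / ((Nat.factorial n : ℝ)) ^ 2
      = Real.exp z *
        ∑ i ∈ Finset.range m,
          ((Nat.factorial (m - 1) : ℝ) /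
              ((Nat.factorial (m - 1 - i) : ℝ) * (Nat.factorial i : ℝ) ^ 2)) * z ^ i := by
  -- f: polynomial coefficients, g: exp series
  set f : ℕ → ℝ := fun j => (if j < m then ((m-1).factorial : ℝ) /
      (((m-1-j).factorial : ℝ) * ((j.factorial : ℝ))^2) else 0) * z ^ j with hf_def
  set g : ℕ → ℝ := fun k => z ^ k / k.factorial with hg_def
  have hg_norm : Summable fun k => ‖g k‖ := by
    have := Real.summable_pow_div_factorial |z|
    refine this.congr fun k => ?_
    simp [hg_def, abs_div, abs_pow]
  have hf_norm : Summable fun j => ‖f j‖ := by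
    apply summable_of_ne_finset_zero (s := Finset.range m)
    intro j hj
    simp only [Finset.mem_range, not_lt] at hj
    simp [hf_def, Nat.not_lt.mpr hj]
  have hexp : Real.exp z = ∑' k, g k := by
    rw [Real.exp_eq_exp_ℝ]
    exact (NormedSpace.expSeries_div_hasSum_exp z).tsum_eq.symm
  have hpoly : (∑ i ∈ Finset.range m,
      ((Nat.factorial (m - 1) : ℝ) /
        ((Nat.factorial (m - 1 - i) : ℝ) * (Nat.factorial i : ℝ) ^ 2)) * z ^ i) = ∑' j, f j := by
    rw [tsum_eq_sum (s := Finset.range m) (fun j hj => by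
      simp only [Finset.mem_range, not_lt] at hj
      simp [hf_def, Nat.not_lt.mpr hj])]
    refine Finset.sum_congr rfl fun j hj => ?_
    simp only [Finset.mem_range] at hj
    simp [hf_def, hj]
  rw [hexp, hpoly, mul_comm, tsum_mul_tsum_eq_tsum_sum_antidiagonal_of_summable_norm hf_norm hg_norm]
  refine tsum_congr fun n => ?_
  rw [Finset.Nat.sum_antidiagonal_eq_sum_range_succ (fun i j => f i * g j)]
  -- per-coefficient identity
  have key : ∑ j ∈ Finset.range (n + 1), f j * g (n - j)
      = (risingFactorial m n : ℝ) * z ^ n / ((n.factorial : ℝ))^2 := by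
    have step1 : ∀ j ∈ Finset.range (n + 1), f j * g (n - j)
        = (((m-1).choose j * n.choose j : ℕ) : ℝ) / (n.factorial : ℝ) * z ^ n := by
      intro j hj
      simp only [Finset.mem_range, Nat.lt_succ_iff] at hj
      by_cases hjm : j < m
      · have hjm' : j ≤ m - 1 := by omega
        have hne1 : ((j.factorial : ℝ)) ≠ 0 := Nat.cast_ne_zero.mpr (Nat.factorial_ne_zero j)
        have hne2 : (((m-1-j).factorial : ℝ)) ≠ 0 := Nat.cast_ne_zero.mpr (Nat.factorial_ne_zero _)
        have hne3 : (((n-j).factorial : ℝ)) ≠ 0 := Nat.cast_ne_zero.mpr (Nat.factorial_ne_zero _)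
        have hne4 : ((n.factorial : ℝ)) ≠ 0 := Nat.cast_ne_zero.mpr (Nat.factorial_ne_zero n)
        have e1 : (((m-1).choose j : ℕ) : ℝ) = ((m-1).factorial : ℝ) /
            ((j.factorial : ℝ) * ((m-1-j).factorial : ℝ)) := by
          rw [eq_div_iff (by positivity)]
          rw [← mul_assoc]; exact_mod_cast Nat.choose_mul_factorial_mul_factorial hjm'
        have e2 : ((n.choose j : ℕ) : ℝ) = (n.factorial : ℝ) /
            ((j.factorial : ℝ) * ((n-j).factorial : ℝ)) := by
          rw [eq_div_iff (by positivity)]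
          rw [← mul_assoc]; exact_mod_cast Nat.choose_mul_factorial_mul_factorial hj
        have hzz : z ^ j * z ^ (n - j) = z ^ n := by
          rw [← pow_add]; congr 1; omega
        simp only [hf_def, hg_def, if_pos hjm]
        push_cast
        rw [e1, e2, ← hzz]
        field_simp
      · have : (m - 1).choose j = 0 := Nat.choose_eq_zero_of_lt (by omega)
        simp [hf_def, hjm, this]
    rw [Finset.sum_congr rfl step1, ← Finset.sum_mul, ← Finset.sum_div, ← Nat.cast_sum,
      vandermonde', risingFactorial_eq m hm n]
    push_cast
    have : (n.factorial : ℝ) ≠ 0 := Nat.cast_ne_zero.mpr (Nat.factorial_ne_zero n)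
    field_simp
  exact key.symm
end

section
/- Let b > 0, Ω ≥ 0 and let m ≥ 1 be an integer. Then ∫_0^∞ f̃(y; b, m, Ω) dy = 1; that is, the integer-order squared shadowed-Rician density is a probability density on [0, ∞). -/
open MeasureTheory


lemma integral_pow_mul_exp (c : ℝ) (hc : 0 < c) (i : ℕ) :
    ∫ y in Set.Ioi (0:ℝ), y ^ i * Real.exp (-(c * y)) = (i.factorial : ℝ) / c ^ (i + 1) := by
  have h := Real.integral_rpow_mul_exp_neg_mul_Ioi (a := (i : ℝ) + 1) (by positivity) hc
  simp only [add_sub_cancel_right, Real.rpow_natCast] at h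
  rw [h, Real.Gamma_nat_eq_factorial]
  have : ((i : ℝ) + 1) = ((i + 1 : ℕ) : ℝ) := by push_cast; ring
  rw [this, Real.rpow_natCast, div_pow, one_pow]
  ring

lemma integrable_pow_mul_exp (c : ℝ) (hc : 0 < c) (i : ℕ) :
    IntegrableOn (fun y : ℝ => y ^ i * Real.exp (-(c * y))) (Set.Ioi 0) := by
  have h := integrableOn_rpow_mul_exp_neg_mul_rpow (s := (i : ℝ)) (p := 1)
    (neg_one_lt_zero.trans_le (Nat.cast_nonneg i)) zero_lt_one hc
  refine h.congr_fun (fun x _ => ?_) measurableSet_Ioi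
  simp [Real.rpow_natCast, neg_mul]

lemma term_eq (x A M z C Fi Fk : ℝ) (hx : x ≠ 0) (hA : A ≠ 0) (hM : M ≠ 0)
    (hFi : Fi ≠ 0) (hFk : Fk ≠ 0) (i k : ℕ) :
    1 / x * (x * M / A) ^ (i + k + 1) * (C * Fi * Fk / (Fk * Fi ^ 2)) * (z / (x * A)) ^ i *
      (Fi / (M / A) ^ (i + 1)) = z ^ i * (x * M) ^ k * C / A ^ (i + k) := by
  simp only [div_pow, mul_pow, pow_add]
  field_simp



/-- The integer-order squared shadowed-Rician (SSR) density with parameters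
`b > 0`, `Ω ≥ 0` and integer fading order `m ≥ 1`. -/
noncomputable def ssrPdf (b : ℝ) (m : ℕ) (Ω : ℝ) (y : ℝ) : ℝ :=
  (1 / (2 * b)) * (2 * b * m / (2 * b * m + Ω)) ^ m *
    Real.exp (-(m * y) / (2 * b * m + Ω)) *
    ∑ i ∈ Finset.range m,
      ((Nat.factorial (m - 1) : ℝ) /
          ((Nat.factorial (m - 1 - i) : ℝ) * (Nat.factorial i : ℝ) ^ 2)) *
        (Ω * y / (2 * b * (2 * b * m + Ω))) ^ i


/-- The integer-order squared shadowed-Rician density integrates to one on `[0, ∞)`: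
it is a probability density. -/
theorem ssr_pdf_integral_eq_one (b Ω : ℝ) (hb : 0 < b) (hΩ : 0 ≤ Ω) (m : ℕ) (hm : 1 ≤ m) :
    ∫ y in Set.Ioi (0:ℝ), ssrPdf b m Ω y = 1 := by
  obtain ⟨n, rfl⟩ : ∃ n, m = n + 1 := ⟨m - 1, (Nat.succ_pred_eq_of_pos hm).symm⟩
  have hA : (0:ℝ) < 2 * b * ((n:ℝ) + 1) + Ω := by positivity
  have hc : (0:ℝ) < ((n:ℝ) + 1) / (2 * b * ((n:ℝ) + 1) + Ω) := by positivity
  set A : ℝ := 2 * b * ((n:ℝ) + 1) + Ω with hAdef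
  set c : ℝ := ((n:ℝ) + 1) / A with hcdef
  set K : ℕ → ℝ := fun i =>
    (1 / (2 * b)) * (2 * b * ((n:ℝ) + 1) / A) ^ (n + 1) *
      ((n.factorial : ℝ) / (((n - i).factorial : ℝ) * (i.factorial : ℝ) ^ 2)) *
      (Ω / (2 * b * A)) ^ i with hKdef
  have hform : (fun y : ℝ => ssrPdf b (n+1) Ω y) = fun y =>
      ∑ i ∈ Finset.range (n+1), K i * (y ^ i * Real.exp (-(c * y))) := by
    funext y
    simp only [ssrPdf, Nat.add_sub_cancel, hKdef]
    push_cast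
    rw [Finset.mul_sum]
    refine Finset.sum_congr rfl fun i _ => ?_
    rw [show -(((n:ℝ) + 1) * y) / A = -(c * y) by rw [hcdef]; ring]
    ring
  rw [hform, integral_finset_sum _
    (fun i _ => ((integrable_pow_mul_exp c hc i).const_mul (K i)))]
  have hstep : ∀ i ∈ Finset.range (n+1),
      (∫ y in Set.Ioi (0:ℝ), K i * (y ^ i * Real.exp (-(c * y)))) =
        Ω ^ i * (2 * b * ((n:ℝ) + 1)) ^ (n - i) * (n.choose i : ℝ) / A ^ n := by
    intro i hi
    have hin : i ≤ n := Nat.lt_succ_iff.mp (Finset.mem_range.mp hi)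
    rw [MeasureTheory.integral_const_mul, integral_pow_mul_exp c hc i]
    obtain ⟨k, rfl⟩ : ∃ k, n = i + k := ⟨n - i, by omega⟩
    have hfac : (((i + k).choose i : ℕ) : ℝ) * (i.factorial : ℝ) * (k.factorial : ℝ)
        = ((i + k).factorial : ℝ) := by
      have h := Nat.choose_mul_factorial_mul_factorial (Nat.le_add_right i k)
      rw [Nat.add_sub_cancel_left] at h
      exact_mod_cast h
    simp only [hKdef, hcdef, Nat.add_sub_cancel_left]
    rw [← hfac]
    have hb' : (2 : ℝ) * b ≠ 0 := by positivity
    have hA' : A ≠ 0 := hA.ne'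
    have hn1 : ((i + k : ℕ):ℝ) + 1 ≠ 0 := by positivity
    have hFi : (i.factorial : ℝ) ≠ 0 := Nat.cast_ne_zero.mpr i.factorial_ne_zero
    have hFk : (k.factorial : ℝ) ≠ 0 := Nat.cast_ne_zero.mpr k.factorial_ne_zero
    exact term_eq (2*b) A (((i + k : ℕ):ℝ) + 1) Ω (((i + k).choose i : ℕ):ℝ)
      (i.factorial : ℝ) (k.factorial : ℝ) hb' hA' hn1 hFi hFk i k
  rw [Finset.sum_congr rfl hstep, ← Finset.sum_div]
  rw [show ∑ i ∈ Finset.range (n+1),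
      Ω ^ i * (2 * b * ((n:ℝ) + 1)) ^ (n - i) * (n.choose i : ℝ)
      = (Ω + 2 * b * ((n:ℝ) + 1)) ^ n from (add_pow Ω _ n).symm]
  rw [hAdef, show Ω + 2 * b * ((n:ℝ) + 1) = 2 * b * ((n:ℝ) + 1) + Ω by ring]
  exact div_self (pow_ne_zero _ hA.ne')
end

section
/- Let b > 0, Ω ≥ 0 and let m ≥ 1 be an integer. Then ∫_0^∞ y · f̃(y; b, m, Ω) dy = 2b + Ω; that is, the mean of the integer-order squared shadowed-Rician distribution equals twice the scattered-component power parameter b plus the line-of-sight power parameter Ω. -/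
open MeasureTheory

lemma int_pow_exp_integrable (n : ℕ) {c : ℝ} (hc : 0 < c) :
    IntegrableOn (fun y : ℝ => y ^ n * Real.exp (-(c * y))) (Set.Ioi 0) := by
  have hs : (-1 : ℝ) < n := by
    have := Nat.cast_nonneg (α := ℝ) n; linarith
  have h := integrableOn_rpow_mul_exp_neg_mul_rpow (p := 1) (s := n) hs zero_lt_one hc
  simpa [Real.rpow_one, Real.rpow_natCast, neg_mul] using h

lemma int_pow_exp (n : ℕ) {c : ℝ} (hc : 0 < c) :
    ∫ y in Set.Ioi (0:ℝ), y ^ n * Real.exp (-(c * y)) = n.factorial / c ^ (n + 1) := by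
  have h := Real.integral_rpow_mul_exp_neg_mul_Ioi (a := (n : ℝ) + 1) (by positivity) hc
  rw [show ((n:ℝ) + 1 - 1) = ((n : ℕ) : ℝ) by ring] at h
  rw [Real.Gamma_nat_eq_factorial] at h
  rw [show ((n:ℝ) + 1) = ((n + 1 : ℕ) : ℝ) by push_cast; ring] at h
  simp only [Real.rpow_natCast] at h
  rw [h, one_div, inv_pow]
  ring

lemma sum_choose_pow (k : ℕ) (x : ℝ) :
    ∑ i ∈ Finset.range (k + 1), (k.choose i : ℝ) * x ^ i = (1 + x) ^ k := by
  rw [show (1 + x) = (x + 1) by ring, add_pow]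
  exact Finset.sum_congr rfl fun i _ => by ring

lemma sum_choose_id (n : ℕ) (x : ℝ) :
    ∑ i ∈ Finset.range (n + 1), ((n.choose i : ℝ) * (i + 1)) * x ^ i
      = (1 + x) ^ n + n * x * (1 + x) ^ (n - 1) := by
  have h2 : ∀ k : ℕ, ∑ i ∈ Finset.range (k + 1), ((i : ℝ) * (k.choose i : ℝ)) * x ^ i
      = k * x * (1 + x) ^ (k - 1) := by
    intro k
    cases k with
    | zero => simp
    | succ j =>
      rw [Finset.sum_range_succ']
      simp only [Nat.cast_zero, zero_mul, mul_zero, add_zero, pow_zero, mul_one,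
        Nat.add_sub_cancel]
      have key : ∀ i : ℕ, (((i + 1 : ℕ) : ℝ) * ((j + 1).choose (i + 1) : ℝ))
          = ((j + 1 : ℕ) : ℝ) * (j.choose i : ℝ) := by
        intro i
        have h := Nat.add_one_mul_choose_eq j i
        have h' : ((j.succ * j.choose i : ℕ) : ℝ) = (((j + 1).choose (i + 1) * (i + 1) : ℕ) : ℝ) := by
          exact_mod_cast congrArg (Nat.cast (R := ℝ)) h
        push_cast at h' ⊢
        linarith
      calc ∑ i ∈ Finset.range (j + 1), (((i + 1 : ℕ) : ℝ) * ((j + 1).choose (i + 1) : ℝ)) * x ^ (i + 1)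
          = ((j + 1 : ℕ) : ℝ) * x * ∑ i ∈ Finset.range (j + 1), (j.choose i : ℝ) * x ^ i := by
            rw [Finset.mul_sum]
            refine Finset.sum_congr rfl fun i _ => ?_
            rw [key i]; ring
        _ = ((j + 1 : ℕ) : ℝ) * x * (1 + x) ^ j := by rw [sum_choose_pow]
  calc ∑ i ∈ Finset.range (n + 1), ((n.choose i : ℝ) * (i + 1)) * x ^ i
      = ∑ i ∈ Finset.range (n + 1), (((i : ℝ) * (n.choose i : ℝ)) * x ^ i
          + (n.choose i : ℝ) * x ^ i) := by
        refine Finset.sum_congr rfl fun i _ => ?_; ring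
    _ = n * x * (1 + x) ^ (n - 1) + (1 + x) ^ n := by
        rw [Finset.sum_add_distrib, sum_choose_pow, h2 n]
    _ = (1 + x) ^ n + n * x * (1 + x) ^ (n - 1) := by ring

lemma final_alg (b Ω : ℝ) (hb : 0 < b) (hΩ : 0 ≤ Ω) (n : ℕ) :
    ∑ i ∈ Finset.range (n + 1),
      ((1 / (2 * b)) * (2 * b * ((n : ℝ) + 1) / (2 * b * ((n : ℝ) + 1) + Ω)) ^ (n + 1) *
          ((n.factorial : ℝ) /
            ((Nat.factorial (n - i) : ℝ) * (Nat.factorial i : ℝ) ^ 2)) *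
          (Ω / (2 * b * (2 * b * ((n : ℝ) + 1) + Ω))) ^ i) *
        ((Nat.factorial (i + 1) : ℝ) /
          (((n : ℝ) + 1) / (2 * b * ((n : ℝ) + 1) + Ω)) ^ (i + 1 + 1))
      = 2 * b + Ω := by
  have hN : (0:ℝ) < (n : ℝ) + 1 := by positivity
  have hu : (0:ℝ) < 2 * b * ((n : ℝ) + 1) := by positivity
  have hT : (0:ℝ) < 2 * b * ((n : ℝ) + 1) + Ω := by positivity
  set N : ℝ := (n : ℝ) + 1 with hNdef
  set u : ℝ := 2 * b * N with hudef
  set T : ℝ := u + Ω with hTdef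
  set x : ℝ := Ω / u with hxdef
  clear_value N u T x
  have hbne : (2 * b : ℝ) ≠ 0 := by positivity
  have hNne : N ≠ 0 := ne_of_gt hN
  have hune : u ≠ 0 := ne_of_gt hu
  have hTne : T ≠ 0 := ne_of_gt hT
  have step : ∀ i ∈ Finset.range (n + 1),
      ((1 / (2 * b)) * (u / T) ^ (n + 1) *
          ((n.factorial : ℝ) /
            ((Nat.factorial (n - i) : ℝ) * (Nat.factorial i : ℝ) ^ 2)) *
          (Ω / (2 * b * T)) ^ i) *
        ((Nat.factorial (i + 1) : ℝ) / (N / T) ^ (i + 1 + 1))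
      = ((1 / (2 * b)) * (u / T) ^ (n + 1) * (T / N) ^ 2) *
          (((n.choose i : ℝ) * (i + 1)) * x ^ i) := by
    intro i hi
    have hin : i ≤ n := Nat.lt_succ_iff.mp (Finset.mem_range.mp hi)
    have hfact : (n.factorial : ℝ)
        = (n.choose i : ℝ) * (Nat.factorial i : ℝ) * (Nat.factorial (n - i) : ℝ) := by
      exact_mod_cast (Nat.choose_mul_factorial_mul_factorial hin).symm
    have hfs : (Nat.factorial (i + 1) : ℝ) = ((i : ℝ) + 1) * (Nat.factorial i : ℝ) := by
      rw [Nat.factorial_succ]; push_cast; ring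
    have hx : x ^ i = (Ω / (2 * b * T)) ^ i * (T / N) ^ i := by
      rw [← mul_pow]
      congr 1
      rw [hxdef, hudef]
      field_simp
    rw [div_eq_mul_inv ((Nat.factorial (i+1) : ℝ)), ← inv_pow, inv_div]
    rw [hfact, hfs, hx]
    rw [show i + 1 + 1 = i + 2 from rfl, pow_add]
    have hfi : (Nat.factorial i : ℝ) ≠ 0 := by positivity
    have hfni : (Nat.factorial (n - i) : ℝ) ≠ 0 := by positivity
    field_simp
    rw [pow_add, div_pow T N 2]
    field_simp
  rw [Finset.sum_congr rfl step, ← Finset.mul_sum, sum_choose_id]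
  have h1x : 1 + x = T / u := by rw [hxdef, hTdef]; field_simp
  rw [h1x]
  cases n with
  | zero =>
      simp only [Nat.cast_zero, zero_mul, add_zero, pow_one, pow_zero]
      have : N = 1 := by rw [hNdef]; norm_num
      rw [this] at hudef ⊢
      rw [hTdef, hudef]
      have : (2 * b + Ω) ≠ 0 := by positivity
      field_simp
      ring_nf
      field_simp
      ring
  | succ k =>
      have hk : ((k + 1 : ℕ) : ℝ) = (k : ℝ) + 1 := by push_cast; ring
      simp only [Nat.add_sub_cancel]
      have hpq : (u / T) * (T / u) = 1 := by field_simp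
      have e1 : (u / T) ^ (k + 1 + 1) * (T / u) ^ (k + 1) = u / T := by
        calc (u / T) ^ (k + 1 + 1) * (T / u) ^ (k + 1)
            = (u / T) * ((u / T) * (T / u)) ^ (k + 1) := by ring
          _ = u / T := by rw [hpq, one_pow, mul_one]
      have e2 : (u / T) ^ (k + 1 + 1) * (T / u) ^ k = (u / T) ^ 2 := by
        calc (u / T) ^ (k + 1 + 1) * (T / u) ^ k
            = (u / T) ^ 2 * ((u / T) * (T / u)) ^ k := by ring
          _ = (u / T) ^ 2 := by rw [hpq, one_pow, mul_one]
      have expand : (u / T) ^ (k + 1 + 1) *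
          ((T / u) ^ (k + 1) + ((k + 1 : ℕ) : ℝ) * x * (T / u) ^ k)
          = u / T + ((k : ℝ) + 1) * x * (u / T) ^ 2 := by
        rw [mul_add, e1, hk]
        congr 1
        calc (u / T) ^ (k + 1 + 1) * (((k : ℝ) + 1) * x * (T / u) ^ k)
            = ((k : ℝ) + 1) * x * ((u / T) ^ (k + 1 + 1) * (T / u) ^ k) := by ring
          _ = ((k : ℝ) + 1) * x * (u / T) ^ 2 := by rw [e2]
      calc 1 / (2 * b) * (u / T) ^ (k + 1 + 1) * (T / N) ^ 2 *
            ((T / u) ^ (k + 1) + ((k + 1 : ℕ) : ℝ) * x * (T / u) ^ k)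
          = 1 / (2 * b) * (T / N) ^ 2 *
            ((u / T) ^ (k + 1 + 1) * ((T / u) ^ (k + 1) + ((k + 1 : ℕ) : ℝ) * x * (T / u) ^ k)) := by
            ring
        _ = 1 / (2 * b) * (T / N) ^ 2 * (u / T + ((k : ℝ) + 1) * x * (u / T) ^ 2) := by
            rw [expand]
        _ = 2 * b + Ω := by
            rw [hxdef, hTdef, hudef, hNdef]
            have hN2 : ((↑(k+1) : ℝ) + 1) = (k : ℝ) + 2 := by push_cast; ring
            field_simp
            push_cast
            ring

/-- The mean of the integer-order squared shadowed-Rician distribution is `2b + Ω`. -/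
theorem ssr_mean (b Ω : ℝ) (hb : 0 < b) (hΩ : 0 ≤ Ω) (m : ℕ) (hm : 1 ≤ m) :
    ∫ y in Set.Ioi (0:ℝ), y * ssrPdf b m Ω y = 2 * b + Ω := by
  obtain ⟨n, rfl⟩ : ∃ n, m = n + 1 := ⟨m - 1, (Nat.succ_pred_eq_of_pos hm).symm⟩
  have hT : (0:ℝ) < 2 * b * ((n : ℝ) + 1) + Ω := by positivity
  have hc : (0:ℝ) < ((n : ℝ) + 1) / (2 * b * ((n : ℝ) + 1) + Ω) := by positivity
  have hrw : ∀ y : ℝ, y * ssrPdf b (n + 1) Ω y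
      = ∑ i ∈ Finset.range (n + 1),
          ((1 / (2 * b)) * (2 * b * ((n : ℝ) + 1) / (2 * b * ((n : ℝ) + 1) + Ω)) ^ (n + 1) *
            ((n.factorial : ℝ) /
              ((Nat.factorial (n - i) : ℝ) * (Nat.factorial i : ℝ) ^ 2)) *
            (Ω / (2 * b * (2 * b * ((n : ℝ) + 1) + Ω))) ^ i) *
          (y ^ (i + 1) *
            Real.exp (-(((n : ℝ) + 1) / (2 * b * ((n : ℝ) + 1) + Ω) * y))) := by
    intro y
    unfold ssrPdf
    simp only [Nat.add_sub_cancel]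
    push_cast
    simp only [Finset.mul_sum]
    refine Finset.sum_congr rfl fun i _ => ?_
    rw [show Real.exp (-(((n : ℝ) + 1) * y) / (2 * b * ((n : ℝ) + 1) + Ω))
        = Real.exp (-(((n : ℝ) + 1) / (2 * b * ((n : ℝ) + 1) + Ω) * y)) by congr 1; ring]
    ring
  simp only [hrw]
  rw [integral_finset_sum _ (fun i _ =>
    ((int_pow_exp_integrable (i + 1) hc).const_mul _))]
  simp only [MeasureTheory.integral_const_mul]
  rw [Finset.sum_congr rfl fun i _ => by rw [int_pow_exp (i + 1) hc]]
  exact final_alg b Ω hb hΩ n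
end

section
/- Let (Ω', 𝓕, ℙ) be a probability space, let b > 0, Ω ≥ 0, let m ≥ 1 be an integer, and let X : Ω' → ℝ be a random variable whose probability density function with respect to Lebesgue measure is almost everywhere equal to x ↦ (if x ≥ 0 then 2x · f̃(x²; b, m, Ω) else 0) (the shadowed-Rician amplitude density with integer fading order). Then for every k > 0, the random variable Y = k · X² has probability density function with respect to Lebesgue measure almost everywhere equal to y ↦ (if y ≥ 0 then f̃(y; k·b, m, k·Ω) else 0). That is, a positive multiple of the square of a shadowed-Rician random variable with parameters (b, m, Ω) is squared-shadowed-Rician distributed with parameters (k·b, m, k·Ω). -/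
open MeasureTheory Set
open scoped ProbabilityTheory ENNReal

lemma ssr_cont (b : ℝ) (m : ℕ) (Ω : ℝ) : Continuous (ssrPdf b m Ω) := by
  unfold ssrPdf; fun_prop

lemma ssr_nonneg {b Ω : ℝ} (hb : 0 < b) (hΩ : 0 ≤ Ω) (m : ℕ) {y : ℝ} (hy : 0 ≤ y) :
    0 ≤ ssrPdf b m Ω y := by
  unfold ssrPdf
  have h1 : (0:ℝ) ≤ 2 * b * m + Ω := by positivity
  apply mul_nonneg
  apply mul_nonneg
  · positivity
  · positivity
  · apply Finset.sum_nonneg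
    intro i _
    have : (0:ℝ) ≤ Ω * y / (2 * b * (2 * b * m + Ω)) := by positivity
    positivity

lemma ssr_scale {b Ω k : ℝ} (hb : 0 < b) (hΩ : 0 ≤ Ω) {m : ℕ} (hm : 1 ≤ m) (hk : 0 < k)
    (y : ℝ) : ssrPdf (k * b) m (k * Ω) (k * y) = ssrPdf b m Ω y / k := by
  have hm' : (1:ℝ) ≤ (m:ℝ) := by exact_mod_cast hm
  have hc : (0:ℝ) < 2 * b * m + Ω := by nlinarith
  unfold ssrPdf
  have h1 : 2 * (k*b) * (m:ℝ) + k * Ω = k * (2 * b * m + Ω) := by ring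
  rw [h1]
  have e1 : 2 * (k*b) * (m:ℝ) / (k * (2*b*m + Ω)) = 2*b*m / (2*b*m + Ω) := by
    rw [show 2 * (k*b) * (m:ℝ) = k * (2*b*m) by ring, mul_div_mul_left _ _ hk.ne']
  have e2 : -((m:ℝ) * (k*y)) / (k * (2*b*m + Ω)) = -((m:ℝ)*y) / (2*b*m + Ω) := by
    rw [show -((m:ℝ) * (k*y)) = k * -((m:ℝ)*y) by ring, mul_div_mul_left _ _ hk.ne']
  have e3 : k*Ω * (k*y) / (2 * (k*b) * (k * (2*b*m + Ω))) = Ω*y / (2*b*(2*b*m+Ω)) := by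
    field_simp
  have e4 : (1:ℝ)/(2*(k*b)) = 1/(2*b)/k := by
    field_simp
  rw [e1, e2, e3, e4]
  ring

lemma lintegral_Ioi_sq_subst {k : ℝ} (hk : 0 < k) (g : ℝ → ℝ≥0∞) :
    ∫⁻ y in Ioi (0:ℝ), g y = ∫⁻ x in Ioi (0:ℝ), ENNReal.ofReal (2*k*x) * g (k * x^2) := by
  have himg : (fun x : ℝ => k * x^2) '' Ioi 0 = Ioi 0 := by
    ext y
    constructor
    · rintro ⟨x, hx, rfl⟩
      exact mul_pos hk (pow_pos hx 2)
    · intro hy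
      refine ⟨Real.sqrt (y/k), Real.sqrt_pos.mpr (div_pos hy hk), ?_⟩
      have : Real.sqrt (y/k) ^ 2 = y / k := Real.sq_sqrt (le_of_lt (div_pos hy hk))
      simp only [this]
      field_simp
  have hderiv : ∀ x ∈ Ioi (0:ℝ), HasDerivWithinAt (fun x : ℝ => k * x^2) (2*k*x) (Ioi 0) x := by
    intro x hx
    have h := ((hasDerivAt_pow 2 x).const_mul k).hasDerivWithinAt (s := Ioi 0)
    convert h using 1
    · rfl
    · rfl
    · simp; ring
  have hinj : InjOn (fun x : ℝ => k * x^2) (Ioi 0) := by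
    intro x hx y hy h
    simp only at h
    have h2 : x^2 = y^2 := mul_left_cancel₀ hk.ne' h
    exact (sq_eq_sq₀ (le_of_lt hx) (le_of_lt hy)).mp h2
  conv_lhs => rw [← himg]
  rw [lintegral_image_eq_lintegral_abs_det_fderiv_mul volume measurableSet_Ioi
      (fun x hx => (hderiv x hx).hasFDerivWithinAt) hinj g]
  refine setLIntegral_congr_fun measurableSet_Ioi (fun x hx => ?_)
  simp only [ContinuousLinearMap.det_toSpanSingleton]
  rw [abs_of_nonneg (by have hx' : (0:ℝ) < x := hx; positivity : (0:ℝ) ≤ 2*k*x)]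

lemma ssr_integral_aux {b Ω : ℝ} (hb : 0 < b) (hΩ : 0 ≤ Ω) {m : ℕ} (hm : 1 ≤ m) :
    IntegrableOn (ssrPdf b m Ω) (Ioi 0) volume ∧
      ∫ y in Ioi (0:ℝ), ssrPdf b m Ω y = 1 := by
  have hm' : (1:ℝ) ≤ (m:ℝ) := by exact_mod_cast hm
  have hm0 : (m:ℝ) ≠ 0 := by positivity
  have hc : (0:ℝ) < 2 * b * m + Ω := by nlinarith
  set c : ℝ := 2 * b * m + Ω with hcdef
  set r : ℝ := (m:ℝ) / c with hrdef
  have hr : 0 < r := div_pos (by linarith) hc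
  -- rewrite the density as a finite sum of gamma-type integrands
  have hrepr : ∀ y : ℝ, ssrPdf b m Ω y =
      ∑ i ∈ Finset.range m,
        ((1/(2*b)) * (2*b*(m:ℝ)/c)^m *
            ((Nat.factorial (m-1) : ℝ) / ((Nat.factorial (m-1-i) : ℝ) * (Nat.factorial i : ℝ)^2)) *
          (Ω/(2*b*c))^i) * (y^i * Real.exp (-(r*y))) := by
    intro y
    unfold ssrPdf
    rw [Finset.mul_sum]
    refine Finset.sum_congr rfl fun i _ => ?_
    rw [show Ω * y / (2*b*c) = (Ω/(2*b*c)) * y from by ring, mul_pow,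
      show -((m:ℝ)*y)/c = -(r*y) from by rw [hrdef]; ring]
    ring
  -- integrability of each summand
  have hbase : ∀ i : ℕ, IntegrableOn (fun y : ℝ => y^i * Real.exp (-(r*y))) (Ioi 0) volume := by
    intro i
    have h0 : IntegrableOn (fun x : ℝ => Real.exp (-x) * x ^ ((i:ℝ) + 1 - 1)) (Ioi 0) volume :=
      Real.GammaIntegral_convergent (by positivity)
    have h1 : IntegrableOn (fun y : ℝ => Real.exp (-(r*y)) * (r*y) ^ ((i:ℝ)+1-1)) (Ioi 0) volume := by
      have h2 := (integrableOn_Ioi_comp_mul_left_iff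
        (fun x : ℝ => Real.exp (-x) * x ^ ((i:ℝ)+1-1)) 0 hr).mpr
      simpa [mul_zero] using h2 (by simpa using h0)
    have h2 := h1.const_mul ((r:ℝ)^i)⁻¹
    refine IntegrableOn.congr_fun h2 (fun y hy => ?_) measurableSet_Ioi
    have hy' : (0:ℝ) < y := hy
    rw [add_sub_cancel_right, Real.rpow_natCast, mul_pow]
    field_simp
  -- value of each summand integral
  have hval : ∀ i : ℕ, ∫ y in Ioi (0:ℝ), y^i * Real.exp (-(r*y)) = (Nat.factorial i : ℝ) / r^(i+1) := by
    intro i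
    have h0 := Real.integral_rpow_mul_exp_neg_mul_Ioi (a := (i:ℝ)+1) (r := r) (by positivity) hr
    have h1 : ∫ y in Ioi (0:ℝ), y^i * Real.exp (-(r*y)) =
        ∫ t in Ioi (0:ℝ), t ^ ((i:ℝ)+1-1) * Real.exp (-(r*t)) := by
      refine setIntegral_congr_fun measurableSet_Ioi (fun t ht => ?_)
      rw [add_sub_cancel_right, Real.rpow_natCast]
    rw [h1, h0, Real.Gamma_nat_eq_factorial i,
      show ((i:ℝ)+1) = ((i+1:ℕ):ℝ) from by push_cast; ring,
      Real.rpow_natCast, div_pow, one_pow, div_mul_eq_mul_div, one_mul]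
  have hint : IntegrableOn (ssrPdf b m Ω) (Ioi 0) volume := by
    rw [show ssrPdf b m Ω = _ from funext hrepr]
    exact integrable_finset_sum _ (fun i _ => (hbase i).const_mul _)
  refine ⟨hint, ?_⟩
  have hb' : b ≠ 0 := hb.ne'
  have hc' : c ≠ 0 := hc.ne'
  simp_rw [hrepr]
  rw [integral_finset_sum _ (fun i _ => (hbase i).const_mul _)]
  simp_rw [integral_const_mul, hval]
  have key : ∀ i ∈ Finset.range m,
      (1/(2*b)) * (2*b*(m:ℝ)/c)^m *
          ((Nat.factorial (m-1) : ℝ) / ((Nat.factorial (m-1-i) : ℝ) * (Nat.factorial i : ℝ)^2)) *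
        (Ω/(2*b*c))^i * ((Nat.factorial i : ℝ) / r^(i+1)) =
      ((2*b*(m:ℝ)/c)^m * (c/(2*b*(m:ℝ)))) * (((m-1).choose i : ℝ) * (Ω/(2*b*(m:ℝ)))^i) := by
    intro i hi
    have hile : i ≤ m - 1 := by
      have := Finset.mem_range.mp hi; omega
    have hchoose : ((m-1).choose i : ℝ) * (Nat.factorial i : ℝ) * (Nat.factorial (m-1-i) : ℝ)
        = (Nat.factorial (m-1) : ℝ) := by
      exact_mod_cast congrArg (Nat.cast (R := ℝ)) (Nat.choose_mul_factorial_mul_factorial hile)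
    have hfi : (Nat.factorial i : ℝ) ≠ 0 := Nat.cast_ne_zero.mpr (Nat.factorial_ne_zero i)
    have hfmi : (Nat.factorial (m-1-i) : ℝ) ≠ 0 := Nat.cast_ne_zero.mpr (Nat.factorial_ne_zero _)
    have h5 : ((Nat.factorial (m-1) : ℝ) / ((Nat.factorial (m-1-i) : ℝ) * (Nat.factorial i : ℝ)^2))
        * (Nat.factorial i : ℝ) = ((m-1).choose i : ℝ) := by
      rw [← hchoose]; field_simp
    have h6 : (Ω/(2*b*c))^i / ((m:ℝ)/c)^(i+1) = (Ω/(2*b*(m:ℝ)))^i * (c/(m:ℝ)) := by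
      rw [pow_succ, ← div_div, ← div_pow,
        show Ω/(2*b*c) / ((m:ℝ)/c) = Ω/(2*b*(m:ℝ)) from by field_simp,
        div_eq_mul_inv, inv_div]
    rw [hrdef]
    calc (1/(2*b)) * (2*b*(m:ℝ)/c)^m *
          ((Nat.factorial (m-1) : ℝ) / ((Nat.factorial (m-1-i) : ℝ) * (Nat.factorial i : ℝ)^2)) *
          (Ω/(2*b*c))^i * ((Nat.factorial i : ℝ) / ((m:ℝ)/c)^(i+1))
        = (2*b*(m:ℝ)/c)^m *
            ((((Nat.factorial (m-1) : ℝ) / ((Nat.factorial (m-1-i) : ℝ) * (Nat.factorial i : ℝ)^2))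
              * (Nat.factorial i : ℝ)) * ((Ω/(2*b*c))^i / ((m:ℝ)/c)^(i+1))) * (1/(2*b)) := by
          ring
      _ = (2*b*(m:ℝ)/c)^m * (((m-1).choose i : ℝ) * ((Ω/(2*b*(m:ℝ)))^i * (c/(m:ℝ)))) * (1/(2*b)) := by
          rw [h5, h6]
      _ = ((2*b*(m:ℝ)/c)^m * (c/(2*b*(m:ℝ)))) * (((m-1).choose i : ℝ) * (Ω/(2*b*(m:ℝ)))^i) := by
          field_simp
  rw [Finset.sum_congr rfl key, ← Finset.mul_sum]
  have hsum : (Ω/(2*b*(m:ℝ)) + 1)^(m-1) =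
      ∑ i ∈ Finset.range m, (((m-1).choose i : ℝ) * (Ω/(2*b*(m:ℝ)))^i) := by
    rw [add_pow, show (m-1)+1 = m from by omega]
    exact Finset.sum_congr rfl fun i _ => by rw [one_pow, mul_one, mul_comm]
  rw [← hsum]
  have ht1 : Ω/(2*b*(m:ℝ)) + 1 = c/(2*b*(m:ℝ)) := by
    rw [hcdef]; field_simp; ring
  rw [ht1, mul_assoc, ← pow_succ', show (m-1)+1 = m from by omega, ← mul_pow,
    show (2*b*(m:ℝ)/c) * (c/(2*b*(m:ℝ))) = 1 from by field_simp, one_pow]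

lemma ssr_lintegral_one {b Ω : ℝ} (hb : 0 < b) (hΩ : 0 ≤ Ω) {m : ℕ} (hm : 1 ≤ m) :
    ∫⁻ y in Ioi (0:ℝ), ENNReal.ofReal (ssrPdf b m Ω y) = 1 := by
  obtain ⟨hint, hval⟩ := ssr_integral_aux hb hΩ hm
  rw [← ofReal_integral_eq_lintegral_ofReal hint
      ((ae_restrict_iff' measurableSet_Ioi).mpr
        (ae_of_all _ fun y hy => ssr_nonneg hb hΩ m (le_of_lt hy))),
    hval, ENNReal.ofReal_one]

/-- If `X` has the shadowed-Rician amplitude density `x ↦ 2x·f̃(x²; b, m, Ω)` (for `x ≥ 0`)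
with integer fading order `m`, then for any `k > 0` the random variable `Y = k·X²` is
squared-shadowed-Rician with parameters `(k·b, m, k·Ω)`. -/
theorem scaled_square_of_shadowed_rician_is_ssr
    {Ω' : Type*} [MeasureSpace Ω'] [IsProbabilityMeasure (ℙ : Measure Ω')]
    (b Ω : ℝ) (hb : 0 < b) (hΩ : 0 ≤ Ω) (m : ℕ) (hm : 1 ≤ m)
    (X : Ω' → ℝ) (hXm : Measurable X)
    (hX : MeasureTheory.pdf X ℙ volume
        =ᵐ[volume] fun x => ENNReal.ofReal (if 0 ≤ x then 2 * x * ssrPdf b m Ω (x ^ 2) else 0))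
    (k : ℝ) (hk : 0 < k) :
    MeasureTheory.pdf (fun ω => k * (X ω) ^ 2) ℙ volume
      =ᵐ[volume] fun y => ENNReal.ofReal (if 0 ≤ y then ssrPdf (k * b) m (k * Ω) y else 0) := by
  set f : ℝ → ℝ≥0∞ :=
    fun x => ENNReal.ofReal (if 0 ≤ x then 2 * x * ssrPdf b m Ω (x ^ 2) else 0) with hfdef
  set g : ℝ → ℝ≥0∞ :=
    fun y => ENNReal.ofReal (if 0 ≤ y then ssrPdf (k * b) m (k * Ω) y else 0) with hgdef
  have hgmeas : Measurable g := by
    apply Measurable.ennreal_ofReal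
    exact Measurable.ite measurableSet_Ici ((ssr_cont (k*b) m (k*Ω)).measurable) measurable_const
  have hf0 : ∀ x : ℝ, x ≤ 0 → f x = 0 := by
    intro x hx
    rw [hfdef]
    by_cases h : 0 ≤ x
    · have hx0 : x = 0 := le_antisymm hx h
      simp [hx0]
    · simp [h]
  have hfind : f = (Ioi (0:ℝ)).indicator f := by
    funext x
    by_cases h : 0 < x
    · rw [Set.indicator_of_mem (show x ∈ Ioi 0 from h)]
    · rw [Set.indicator_of_notMem (show x ∉ Ioi 0 from h), hf0 x (not_lt.mp h)]
  -- total mass of f is 1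
  have hmass : ∫⁻ x, f x = 1 := by
    rw [← lintegral_add_compl f (measurableSet_Iic (a := (0:ℝ))), compl_Iic]
    have h1 : ∫⁻ x in Iic (0:ℝ), f x = 0 := by
      rw [setLIntegral_congr_fun measurableSet_Iic (fun x hx => hf0 x hx),
        lintegral_zero]
    have h2 : ∫⁻ x in Ioi (0:ℝ), f x = 1 := by
      have hs := lintegral_Ioi_sq_subst one_pos (fun y => ENNReal.ofReal (ssrPdf b m Ω y))
      rw [ssr_lintegral_one hb hΩ hm] at hs
      calc ∫⁻ x in Ioi (0:ℝ), f x
          = ∫⁻ x in Ioi (0:ℝ),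
              ENNReal.ofReal (2*1*x) * ENNReal.ofReal (ssrPdf b m Ω (1*x^2)) := by
            refine setLIntegral_congr_fun measurableSet_Ioi (fun x hx => ?_)
            have hx' : (0:ℝ) < x := hx
            rw [hfdef]
            simp only
            rw [if_pos (le_of_lt hx'), ← ENNReal.ofReal_mul (by linarith : (0:ℝ) ≤ 2*1*x)]
            norm_num
        _ = 1 := hs.symm
    rw [h1, h2, zero_add]
  -- map X ℙ = withDensity f
  haveI : IsProbabilityMeasure (Measure.map X ℙ) := Measure.isProbabilityMeasure_map hXm.aemeasurable
  rw [pdf_def] at hX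
  have hwd : volume.withDensity ((Measure.map X ℙ).rnDeriv volume) = volume.withDensity f :=
    withDensity_congr_ae hX
  have hdec := Measure.haveLebesgueDecomposition_add (Measure.map X ℙ) volume
  have h5 : volume.withDensity f Set.univ = 1 := by
    rw [withDensity_apply _ MeasurableSet.univ, Measure.restrict_univ]
    exact hmass
  have hsing : (Measure.map X ℙ).singularPart volume = 0 := by
    have h4 : (1:ℝ≥0∞) = (Measure.map X ℙ).singularPart volume Set.univ
        + volume.withDensity ((Measure.map X ℙ).rnDeriv volume) Set.univ := by
      conv_lhs => rw [← measure_univ (μ := Measure.map X ℙ)]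
      conv_lhs => rw [hdec]
      simp [Measure.add_apply]
    rw [hwd, h5] at h4
    refine Measure.measure_univ_eq_zero.mp ?_
    exact (ENNReal.add_left_inj ENNReal.one_ne_top).mp (by rw [← h4, zero_add])
  have hmapX : Measure.map X ℙ = volume.withDensity f := by
    conv_lhs => rw [hdec]
    rw [hsing, hwd, zero_add]
  -- push forward by x ↦ k x²
  have hφ : Measurable (fun x : ℝ => k * x^2) := by fun_prop
  have hmapY : Measure.map (fun ω => k * (X ω)^2) ℙ
      = Measure.map (fun x : ℝ => k * x^2) (volume.withDensity f) := by
    rw [← hmapX, Measure.map_map hφ hXm]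
    rfl
  have hm' : (1:ℝ) ≤ (m:ℝ) := by exact_mod_cast hm
  have hfinal : Measure.map (fun x : ℝ => k * x^2) (volume.withDensity f)
      = volume.withDensity g := by
    ext s hs
    rw [Measure.map_apply hφ hs, withDensity_apply _ (hφ hs), withDensity_apply _ hs]
    have hgind : ∀ᵐ y : ℝ, g y = (Ioi (0:ℝ)).indicator g y := by
      have h0 : ∀ᵐ y : ℝ, y ∉ ({0} : Set ℝ) :=
        measure_eq_zero_iff_ae_notMem.mp Real.volume_singleton
      filter_upwards [h0] with y hy
      rcases lt_or_ge 0 y with h | h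
      · rw [Set.indicator_of_mem (show y ∈ Ioi 0 from h)]
      · rw [Set.indicator_of_notMem (show y ∉ Ioi 0 from not_lt.mpr h)]
        have hy' : y < 0 := lt_of_le_of_ne h (by simpa [eq_comm] using hy)
        rw [hgdef]
        simp [not_le.mpr hy']
    -- LHS
    have hL : ∫⁻ x in (fun x : ℝ => k * x^2) ⁻¹' s, f x
        = ∫⁻ x in Ioi (0:ℝ), ((fun x : ℝ => k * x^2) ⁻¹' s).indicator f x := by
      conv_lhs => rw [hfind]
      rw [lintegral_indicator measurableSet_Ioi, Measure.restrict_restrict measurableSet_Ioi,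
        lintegral_indicator (hφ hs), Measure.restrict_restrict (hφ hs), inter_comm]
    -- RHS
    have hR : ∫⁻ y in s, g y = ∫⁻ y in Ioi (0:ℝ), s.indicator g y := by
      rw [lintegral_congr_ae (ae_restrict_of_ae hgind),
        lintegral_indicator measurableSet_Ioi, Measure.restrict_restrict measurableSet_Ioi,
        lintegral_indicator hs, Measure.restrict_restrict hs, inter_comm]
    rw [hL, hR, lintegral_Ioi_sq_subst hk (s.indicator g)]
    refine setLIntegral_congr_fun measurableSet_Ioi (fun x hx => ?_)
    have hx' : (0:ℝ) < x := hx
    by_cases hxs : k * x^2 ∈ s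
    · rw [Set.indicator_of_mem hxs,
        Set.indicator_of_mem (show x ∈ (fun x : ℝ => k * x^2) ⁻¹' s from hxs)]
      rw [hgdef, hfdef]
      simp only
      rw [if_pos (by positivity : (0:ℝ) ≤ k * x^2), if_pos (le_of_lt hx'),
        ← ENNReal.ofReal_mul (by positivity : (0:ℝ) ≤ 2*k*x)]
      congr 1
      rw [show k * x^2 = k * x^2 from rfl, ssr_scale hb hΩ hm hk (x^2)]
      field_simp
    · rw [Set.indicator_of_notMem hxs,
        Set.indicator_of_notMem (show x ∉ (fun x : ℝ => k * x^2) ⁻¹' s from hxs), mul_zero]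
  rw [pdf_def, hmapY, hfinal]
  exact Measure.rnDeriv_withDensity volume hgmeas
end

section
/- Let (Ω', 𝓕, ℙ) be a probability space, let b > 0, Ω ≥ 0, let m ≥ 1 be an integer, and let Y : Ω' → ℝ be a random variable whose probability density function with respect to Lebesgue measure is almost everywhere equal to y ↦ (if y ≥ 0 then f̃(y; b, m, Ω) else 0). Then Y is integrable and its expectation equals E[Y] = 2b + Ω. -/
open MeasureTheory
open scoped ProbabilityTheory
open Set

lemma integrableOn_pow_mul_exp_neg (k : ℕ) {r : ℝ} (hr : 0 < r) :
    IntegrableOn (fun t : ℝ => t ^ k * Real.exp (-(r * t))) (Set.Ioi 0) := by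
  have h := integrableOn_rpow_mul_exp_neg_mul_rpow (s := (k:ℝ)) (p := 1)
    (lt_of_lt_of_le (by norm_num) (Nat.cast_nonneg k)) one_pos hr
  refine h.congr_fun (fun t ht => ?_) measurableSet_Ioi
  beta_reduce
  rw [Real.rpow_one, Real.rpow_natCast, neg_mul]

lemma integral_pow_mul_exp_neg (k : ℕ) {r : ℝ} (hr : 0 < r) :
    ∫ t in Set.Ioi (0:ℝ), t ^ k * Real.exp (-(r * t)) = (Nat.factorial k : ℝ) / r ^ (k+1) := by
  have h := Real.integral_rpow_mul_exp_neg_mul_Ioi (a := (k:ℝ)+1) (by positivity) hr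
  rw [show ((k:ℝ)+1) - 1 = (k:ℝ) by ring] at h
  have h2 : ∫ t in Set.Ioi (0:ℝ), t ^ k * Real.exp (-(r * t))
      = ∫ t in Set.Ioi (0:ℝ), t ^ (k:ℝ) * Real.exp (-(r * t)) := by
    refine setIntegral_congr_fun measurableSet_Ioi (fun t ht => ?_)
    rw [Real.rpow_natCast]
  rw [h2, h, Real.Gamma_nat_eq_factorial,
    show ((k:ℝ)+1) = ((k+1 : ℕ) : ℝ) by push_cast; ring, Real.rpow_natCast]
  rw [div_pow, one_pow, div_mul_eq_mul_div, one_mul]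

lemma sum_choose_mul_pow (n : ℕ) (s : ℝ) :
    ∑ i ∈ Finset.range (n+1), (n.choose i : ℝ) * s ^ i = (1+s)^n := by
  rw [add_comm 1 s, add_pow]
  simp [mul_comm]

lemma sum_mul_choose_mul_pow (n : ℕ) (s : ℝ) :
    ∑ i ∈ Finset.range (n+1), (i : ℝ) * (n.choose i : ℝ) * s ^ i
      = n * s * (1+s)^(n-1) := by
  cases n with
  | zero => simp
  | succ k =>
    rw [Finset.sum_range_succ']
    simp only [Nat.cast_zero, zero_mul, mul_zero, add_zero, pow_zero, mul_one, Nat.cast_ofNat]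
    push_cast
    have hch : ∀ i : ℕ, ((i:ℝ)+1) * ((k+1).choose (i+1) : ℝ) = ((k:ℝ)+1) * (k.choose i : ℝ) := by
      intro i
      have := Nat.add_one_mul_choose_eq k i
      have := congrArg (fun x : ℕ => (x : ℝ)) this
      push_cast at this
      linarith [this]
    calc ∑ i ∈ Finset.range (k+1), ((i:ℝ)+1) * ((k+1).choose (i+1) : ℝ) * s ^ (i+1)
        = ∑ i ∈ Finset.range (k+1), ((k:ℝ)+1) * s * ((k.choose i : ℝ) * s ^ i) := by
          refine Finset.sum_congr rfl (fun i _ => ?_)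
          rw [hch i]; ring
      _ = ((k:ℝ)+1) * s * (1+s)^k := by
          rw [← Finset.mul_sum, sum_choose_mul_pow]
lemma term_norm (b Ω : ℝ) (hb : 0 < b) (hΩ : 0 ≤ Ω) (n i : ℕ) (hi : i ≤ n) :
    (1/(2*b)) * (2*b*((n:ℝ)+1)/(2*b*((n:ℝ)+1)+Ω))^(n+1) *
      ((n.factorial : ℝ)/(((n-i).factorial : ℝ) * (i.factorial : ℝ)^2)) *
      (Ω/(2*b*(2*b*((n:ℝ)+1)+Ω)))^i *
      ((i.factorial : ℝ) * ((2*b*((n:ℝ)+1)+Ω)/((n:ℝ)+1))^(i+1))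
    = (2*b*((n:ℝ)+1)/(2*b*((n:ℝ)+1)+Ω))^n * (n.choose i : ℝ) * (Ω/(2*b*((n:ℝ)+1)))^i := by
  set N : ℝ := (n:ℝ)+1 with hN
  have hN0 : 0 < N := by positivity
  set p : ℝ := 2*b*N+Ω with hp
  have hp0 : 0 < p := by positivity
  have hfact : (n.factorial : ℝ) = (n.choose i : ℝ) * (i.factorial : ℝ) * ((n-i).factorial : ℝ) := by
    exact_mod_cast congrArg (fun x : ℕ => (x:ℝ)) (Nat.choose_mul_factorial_mul_factorial hi).symm
  have hfi : (i.factorial : ℝ) ≠ 0 := Nat.cast_ne_zero.mpr i.factorial_ne_zero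
  have hfni : ((n-i).factorial : ℝ) ≠ 0 := Nat.cast_ne_zero.mpr (n-i).factorial_ne_zero
  have hcomb : (Ω/(2*b*p))^i * (p/N)^i = (Ω/(2*b*N))^i := by
    rw [← mul_pow]; congr 1; field_simp
  rw [hfact, pow_succ (2*b*N/p) n, pow_succ (p/N) i, ← hcomb]
  field_simp

lemma term_exp (b Ω : ℝ) (hb : 0 < b) (hΩ : 0 ≤ Ω) (n i : ℕ) (hi : i ≤ n) :
    (1/(2*b)) * (2*b*((n:ℝ)+1)/(2*b*((n:ℝ)+1)+Ω))^(n+1) *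
      ((n.factorial : ℝ)/(((n-i).factorial : ℝ) * (i.factorial : ℝ)^2)) *
      (Ω/(2*b*(2*b*((n:ℝ)+1)+Ω)))^i *
      (((i+1).factorial : ℝ) * ((2*b*((n:ℝ)+1)+Ω)/((n:ℝ)+1))^(i+2))
    = (2*b*((n:ℝ)+1)/(2*b*((n:ℝ)+1)+Ω))^n * ((2*b*((n:ℝ)+1)+Ω)/((n:ℝ)+1)) *
        (((i:ℝ)+1) * (n.choose i : ℝ)) * (Ω/(2*b*((n:ℝ)+1)))^i := by
  have h := term_norm b Ω hb hΩ n i hi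
  rw [show i+2 = (i+1)+1 by ring, pow_succ, Nat.factorial_succ]
  push_cast
  linear_combination (((i:ℝ)+1) * ((2*b*((n:ℝ)+1)+Ω)/((n:ℝ)+1))) * h
lemma succ_case (b Ω A : ℝ) (hb : 0 < b) (hΩ : 0 ≤ Ω) (hA : 0 ≤ A) (k : ℕ) :
    (2*b*(A+1)/(2*b*(A+1)+Ω))^(k+1) * ((2*b*(A+1)+Ω)/(A+1)) *
      ((1+Ω/(2*b*(A+1)))^(k+1) + A * (Ω/(2*b*(A+1))) * (1+Ω/(2*b*(A+1)))^k) = 2*b+Ω := by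
  have hN0 : (0:ℝ) < A+1 := by positivity
  have hp0 : (0:ℝ) < 2*b*(A+1)+Ω := by positivity
  have h1s : 1 + Ω/(2*b*(A+1)) = (2*b*(A+1)+Ω)/(2*b*(A+1)) := by field_simp
  rw [h1s]
  have hone : (2*b*(A+1)/(2*b*(A+1)+Ω)) * ((2*b*(A+1)+Ω)/(2*b*(A+1))) = 1 := by field_simp
  calc (2*b*(A+1)/(2*b*(A+1)+Ω))^(k+1) * ((2*b*(A+1)+Ω)/(A+1)) *
          (((2*b*(A+1)+Ω)/(2*b*(A+1)))^(k+1)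
            + A * (Ω/(2*b*(A+1))) * ((2*b*(A+1)+Ω)/(2*b*(A+1)))^k)
      = ((2*b*(A+1)/(2*b*(A+1)+Ω)) * ((2*b*(A+1)+Ω)/(2*b*(A+1))))^(k+1) * ((2*b*(A+1)+Ω)/(A+1))
          + ((2*b*(A+1)/(2*b*(A+1)+Ω)) * ((2*b*(A+1)+Ω)/(2*b*(A+1))))^k *
            ((2*b*(A+1)/(2*b*(A+1)+Ω)) * ((2*b*(A+1)+Ω)/(A+1)) * (A * (Ω/(2*b*(A+1))))) := by
        rw [mul_pow, mul_pow]; ring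
    _ = (2*b*(A+1)+Ω)/(A+1)
          + (2*b*(A+1)/(2*b*(A+1)+Ω)) * ((2*b*(A+1)+Ω)/(A+1)) * (A * (Ω/(2*b*(A+1)))) := by
        rw [hone]; ring
    _ = 2*b+Ω := by field_simp; ring

lemma final_scalar (b Ω : ℝ) (hb : 0 < b) (hΩ : 0 ≤ Ω) (n : ℕ) :
    (2*b*((n:ℝ)+1)/(2*b*((n:ℝ)+1)+Ω))^n * ((2*b*((n:ℝ)+1)+Ω)/((n:ℝ)+1)) *
      ((1+Ω/(2*b*((n:ℝ)+1)))^n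
        + n * (Ω/(2*b*((n:ℝ)+1))) * (1+Ω/(2*b*((n:ℝ)+1)))^(n-1)) = 2*b+Ω := by
  cases n with
  | zero => norm_num
  | succ k =>
    simpa only [Nat.add_sub_cancel] using
      succ_case b Ω ((k+1 : ℕ) : ℝ) hb hΩ (Nat.cast_nonneg _) k
lemma ssr_integrals (b Ω : ℝ) (hb : 0 < b) (hΩ : 0 ≤ Ω) (n : ℕ) :
    IntegrableOn (fun y => ssrPdf b (n+1) Ω y) (Set.Ioi 0) volume ∧
    (∫ y in Set.Ioi (0:ℝ), ssrPdf b (n+1) Ω y) = 1 ∧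
    IntegrableOn (fun y => ssrPdf b (n+1) Ω y * y) (Set.Ioi 0) volume ∧
    (∫ y in Set.Ioi (0:ℝ), ssrPdf b (n+1) Ω y * y) = 2*b+Ω := by
  have hN0 : (0:ℝ) < (n:ℝ)+1 := by positivity
  have hp0 : (0:ℝ) < 2*b*((n:ℝ)+1)+Ω := by positivity
  set N : ℝ := (n:ℝ)+1 with hN
  set p : ℝ := 2*b*N+Ω with hp
  set α : ℝ := N/p with hα
  have hα0 : 0 < α := by positivity
  set d : ℕ → ℝ := fun i => (1/(2*b)) * (2*b*N/p)^(n+1) *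
      ((n.factorial : ℝ)/(((n-i).factorial : ℝ) * (i.factorial : ℝ)^2)) *
      (Ω/(2*b*p))^i with hd
  have hform : ∀ y : ℝ, ssrPdf b (n+1) Ω y
      = ∑ i ∈ Finset.range (n+1), d i * (y^i * Real.exp (-(α*y))) := by
    intro y
    rw [ssrPdf]
    push_cast
    rw [Finset.mul_sum]
    refine Finset.sum_congr rfl (fun i _ => ?_)
    simp only [Nat.add_sub_cancel, hd]
    rw [show Ω * y / (2*b*p) = (Ω/(2*b*p))*y by ring, mul_pow,
      show -(((n:ℝ)+1) * y) / p = -(α*y) by rw [hα]; ring]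
    ring
  have hterm : ∀ i ∈ Finset.range (n+1),
      IntegrableOn (fun y => d i * (y^i * Real.exp (-(α*y)))) (Set.Ioi 0) volume :=
    fun i _ => (integrableOn_pow_mul_exp_neg i hα0).const_mul _
  have hsumInt : IntegrableOn
      (fun y => ∑ i ∈ Finset.range (n+1), d i * (y^i * Real.exp (-(α*y)))) (Set.Ioi 0) volume :=
    integrable_finset_sum _ hterm
  have hInt1 : IntegrableOn (fun y => ssrPdf b (n+1) Ω y) (Set.Ioi 0) volume := by
    exact hsumInt.congr_fun (fun y _ => (hform y).symm) measurableSet_Ioi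
  -- value of gamma integrals
  have hval : ∀ i : ℕ, (∫ y in Set.Ioi (0:ℝ), y^i * Real.exp (-(α*y)))
      = (i.factorial : ℝ) * (p/N)^(i+1) := by
    intro i
    rw [integral_pow_mul_exp_neg i hα0, hα, div_pow, div_div_eq_mul_div, mul_div_assoc, div_pow]
  -- normalization integral
  have hI1 : (∫ y in Set.Ioi (0:ℝ), ssrPdf b (n+1) Ω y) = 1 := by
    rw [setIntegral_congr_fun measurableSet_Ioi (fun y (_ : y ∈ Set.Ioi 0) => hform y),
      integral_finset_sum _ hterm]
    have : ∀ i ∈ Finset.range (n+1),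
        (∫ y in Set.Ioi (0:ℝ), d i * (y^i * Real.exp (-(α*y))))
          = (2*b*N/p)^n * ((n.choose i : ℝ) * (Ω/(2*b*N))^i) := by
      intro i hi
      rw [integral_const_mul, hval i, hd]
      rw [← mul_assoc ((2*b*N/p)^n)]
      exact term_norm b Ω hb hΩ n i (Nat.lt_succ_iff.mp (Finset.mem_range.mp hi))
    rw [Finset.sum_congr rfl this, ← Finset.mul_sum, sum_choose_mul_pow, ← mul_pow,
      show (2*b*N/p) * (1 + Ω/(2*b*N)) = 1 by field_simp; exact hp.symm, one_pow]
  have hform2 : ∀ y : ℝ, ssrPdf b (n+1) Ω y * y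
      = ∑ i ∈ Finset.range (n+1), d i * (y^(i+1) * Real.exp (-(α*y))) := by
    intro y
    rw [hform y, Finset.sum_mul]
    exact Finset.sum_congr rfl (fun i _ => by rw [pow_succ]; ring)
  have hterm2 : ∀ i ∈ Finset.range (n+1),
      IntegrableOn (fun y => d i * (y^(i+1) * Real.exp (-(α*y)))) (Set.Ioi 0) volume :=
    fun i _ => (integrableOn_pow_mul_exp_neg (i+1) hα0).const_mul _
  have hInt2 : IntegrableOn (fun y => ssrPdf b (n+1) Ω y * y) (Set.Ioi 0) volume :=
    IntegrableOn.congr_fun (integrable_finset_sum _ hterm2)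
      (fun y _ => (hform2 y).symm) measurableSet_Ioi
  have hI2 : (∫ y in Set.Ioi (0:ℝ), ssrPdf b (n+1) Ω y * y) = 2*b+Ω := by
    rw [setIntegral_congr_fun measurableSet_Ioi (fun y (_ : y ∈ Set.Ioi 0) => hform2 y),
      integral_finset_sum _ hterm2]
    have heach : ∀ i ∈ Finset.range (n+1),
        (∫ y in Set.Ioi (0:ℝ), d i * (y^(i+1) * Real.exp (-(α*y))))
          = (2*b*N/p)^n * (p/N) * ((((i:ℝ)+1) * (n.choose i : ℝ)) * (Ω/(2*b*N))^i) := by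
      intro i hi
      rw [integral_const_mul, hval (i+1), hd]
      have h := term_exp b Ω hb hΩ n i (Nat.lt_succ_iff.mp (Finset.mem_range.mp hi))
      rw [← hN, ← hp] at h
      simp only []
      linear_combination h
    rw [Finset.sum_congr rfl heach, ← Finset.mul_sum]
    have hsum : ∑ i ∈ Finset.range (n+1), ((((i:ℝ)+1) * (n.choose i:ℝ)) * (Ω/(2*b*N))^i)
        = (1+Ω/(2*b*N))^n + (n:ℝ) * (Ω/(2*b*N)) * (1+Ω/(2*b*N))^(n-1) := by
      rw [← sum_choose_mul_pow n (Ω/(2*b*N)), ← sum_mul_choose_mul_pow n (Ω/(2*b*N)),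
        ← Finset.sum_add_distrib]
      exact Finset.sum_congr rfl (fun i _ => by ring)
    rw [hsum]
    exact final_scalar b Ω hb hΩ n
  exact ⟨hInt1, hI1, hInt2, hI2⟩
open scoped ProbabilityTheory

lemma ssrPdf_continuous (b Ω : ℝ) (m : ℕ) : Continuous (ssrPdf b m Ω) := by
  unfold ssrPdf
  fun_prop

lemma ssrPdf_nonneg (b Ω : ℝ) (hb : 0 < b) (hΩ : 0 ≤ Ω) (m : ℕ) {y : ℝ} (hy : 0 ≤ y) :
    0 ≤ ssrPdf b m Ω y := by
  unfold ssrPdf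
  have hp : (0:ℝ) ≤ 2 * b * m + Ω := by positivity
  refine mul_nonneg (mul_nonneg (mul_nonneg (by positivity) ?_) (Real.exp_nonneg _)) ?_
  · exact pow_nonneg (div_nonneg (by positivity) hp) _
  · refine Finset.sum_nonneg (fun i _ => mul_nonneg (div_nonneg (by positivity) (by positivity)) ?_)
    exact pow_nonneg (div_nonneg (mul_nonneg hΩ hy) (by positivity)) _

/-- A squared-shadowed-Rician random variable with integer fading order `m ≥ 1` and
parameters `(b, m, Ω)` is integrable with expectation `2b + Ω`. -/
theorem ssr_expectation
    {Ω' : Type*} [MeasureSpace Ω'] [IsProbabilityMeasure (ℙ : Measure Ω')]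
    (b Ω : ℝ) (hb : 0 < b) (hΩ : 0 ≤ Ω) (m : ℕ) (hm : 1 ≤ m)
    (Y : Ω' → ℝ) (hYm : Measurable Y)
    (hY : MeasureTheory.pdf Y ℙ volume
        =ᵐ[volume] fun y => ENNReal.ofReal (if 0 ≤ y then ssrPdf b m Ω y else 0)) :
    Integrable Y ℙ ∧ ∫ ω, Y ω ∂ℙ = 2 * b + Ω := by
  
  obtain ⟨n, rfl⟩ : ∃ n, m = n + 1 := ⟨m - 1, (Nat.succ_pred_eq_of_pos hm).symm⟩
  obtain ⟨hInt1, hI1, hInt2, hI2⟩ := ssr_integrals b Ω hb hΩ n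
  set g : ℝ → ℝ := fun y => if 0 ≤ y then ssrPdf b (n+1) Ω y else 0 with hg
  have hg0 : ∀ y, 0 ≤ g y := by
    intro y
    by_cases hy : 0 ≤ y <;> simp [hg, hy]
    exact ssrPdf_nonneg b Ω hb hΩ (n+1) hy
  have hgind : g = (Set.Ici (0:ℝ)).indicator (ssrPdf b (n+1) Ω) := by
    funext y
    simp [hg, Set.indicator_apply]
  have hgint : Integrable g volume := by
    rw [hgind, integrable_indicator_iff measurableSet_Ici]
    exact Iff.mpr integrableOn_Ici_iff_integrableOn_Ioi hInt1
  have hgI : (∫ y, g y) = 1 := by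
    rw [hgind, integral_indicator measurableSet_Ici, integral_Ici_eq_integral_Ioi, hI1]
  have hgmind : (fun y => g y * y) = (Set.Ici (0:ℝ)).indicator (fun y => ssrPdf b (n+1) Ω y * y) := by
    funext y
    by_cases hy : 0 ≤ y <;> simp [hg, Set.indicator_apply, hy]
  have hgmint : Integrable (fun y => g y * y) volume := by
    rw [hgmind, integrable_indicator_iff measurableSet_Ici]
    exact Iff.mpr integrableOn_Ici_iff_integrableOn_Ioi hInt2
  have hgmI : (∫ y, g y * y) = 2*b+Ω := by
    rw [hgmind, integral_indicator measurableSet_Ici, integral_Ici_eq_integral_Ioi, hI2]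
  -- lintegral of density is 1
  have hl : (∫⁻ y, ENNReal.ofReal (g y)) = 1 := by
    rw [← ofReal_integral_eq_lintegral_ofReal hgint (Filter.Eventually.of_forall hg0), hgI,
      ENNReal.ofReal_one]
  have hpdf_l : (∫⁻ y, pdf Y ℙ volume y) = 1 := by
    rw [lintegral_congr_ae hY]
    exact hl
  -- HasPDF
  haveI hprob : IsProbabilityMeasure (Measure.map Y ℙ) := Measure.isProbabilityMeasure_map hYm.aemeasurable
  have hdec := Measure.singularPart_add_rnDeriv (Measure.map Y ℙ) volume
  have h0 : (Measure.map Y ℙ).singularPart volume = 0 := by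
    rw [← Measure.measure_univ_eq_zero]
    have h1 := congrArg (fun μ : Measure ℝ => μ Set.univ) hdec
    simp only [Measure.add_apply] at h1
    have h2 : (∫⁻ y, (Measure.map Y ℙ).rnDeriv volume y) = 1 := hpdf_l
    rw [withDensity_apply _ MeasurableSet.univ, setLIntegral_univ, h2,
      (measure_univ : (Measure.map Y ℙ) Set.univ = 1)] at h1
    have h3 : (Measure.map Y ℙ).singularPart volume Set.univ + 1 = 0 + 1 := by
      rw [h1, zero_add]
    exact (ENNReal.add_left_inj ENNReal.one_ne_top).mp h3
  have hmapeq : Measure.map Y ℙ = volume.withDensity (pdf Y ℙ volume) := by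
    conv_lhs => rw [← hdec]
    rw [h0, zero_add]
    rfl
  haveI : HasPDF Y ℙ volume :=
    hasPDF_of_map_eq_withDensity hYm.aemeasurable _ (measurable_pdf Y ℙ volume).aemeasurable hmapeq
  have htor : (fun y => (pdf Y ℙ volume y).toReal) =ᵐ[volume] g := by
    filter_upwards [hY] with y hy
    rw [hy]
    exact ENNReal.toReal_ofReal (hg0 y)
  have hsmul : Integrable (fun y => (pdf Y ℙ volume y).toReal • y) volume := by
    refine hgmint.congr ?_
    filter_upwards [htor] with y hy
    rw [smul_eq_mul, hy]
  have hYint : Integrable Y ℙ :=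
    (pdf.integrable_pdf_smul_iff (measurable_id.aestronglyMeasurable (μ := (volume : Measure ℝ)))).mp hsmul
  refine ⟨hYint, ?_⟩
  have hIY : (∫ y, (pdf Y ℙ volume y).toReal • id y) = ∫ ω, id (Y ω) ∂ℙ :=
    pdf.integral_pdf_smul measurable_id.aestronglyMeasurable
  have hae : (fun y => (pdf Y ℙ volume y).toReal • id y) =ᵐ[(volume : Measure ℝ)]
      (fun y => g y * y) := by
    filter_upwards [htor] with y hy
    rw [smul_eq_mul, hy]
    rfl
  rw [show (fun ω => Y ω) = fun ω => id (Y ω) from rfl, ← hIY, integral_congr_ae hae, hgmI]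
end
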